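/- The propensity score e(V) = P(T=1 | V) is itself a balancing score: T ⊥ V | e(V). -/

import Mathlib

open ProbabilityTheory MeasureTheory

lemma set_fin_two (s : Set (Fin 2)) : s = ∅ ∨ s = {0} ∨ s = {1} ∨ s = Set.univ := by
  by_cases h0 : (0 : Fin 2) ∈ s <;> by_cases h1 : (1 : Fin 2) ∈ s
  · right; right; right; ext x; fin_cases x <;> simp [h0, h1]
  · right; left; ext x; fin_cases x <;> simp [h0, h1]
  · right; right; left; ext x; fin_cases x <;> simp [h0, h1]
  · left; ext x; fin_cases x <;> simp [h0, h1]

lemma balancing_aux {Ω : Type*} {m' mV mΩ : MeasurableSpace Ω} [StandardBorelSpace Ω]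
    {μ : Measure Ω} [IsProbabilityMeasure μ]
    {𝒱 : Type*} [MeasurableSpace 𝒱]
    (T : Ω → Fin 2) (V : Ω → 𝒱)
    (hT : Measurable T) (hV : Measurable V)
    (hm'V : m' ≤ mV) (hmV : mV ≤ mΩ) (hle : m' ≤ mΩ)
    {e : Ω → ℝ} (hedef : (μ⟦T ⁻¹' {1} | mV⟧) = e)
    (he_m' : StronglyMeasurable[m'] e)
    (hVsets : ∀ t : Set 𝒱, MeasurableSet t → MeasurableSet[mV] (V ⁻¹' t)) :
    CondIndepFun m' hle T V μ := by
  have he_int : Integrable e μ := hedef ▸ integrable_condExp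
  set A : Set Ω := T ⁻¹' {1} with hAdef
  have hA : MeasurableSet A := hT (measurableSet_singleton 1)
  have hintA : Integrable (A.indicator fun _ => (1 : ℝ)) μ :=
    (integrable_const 1).indicator hA
  -- key computation: conditional prob of A ∩ B given m' equals e * P(B | m')
  have key : ∀ B : Set Ω, MeasurableSet[mV] B →
      (μ⟦A ∩ B | m'⟧) =ᵐ[μ] fun ω => e ω * (μ⟦B | m'⟧) ω := by
    intro B hB
    have hBΩ : MeasurableSet B := hmV B hB
    have h1 : (A ∩ B).indicator (fun _ => (1 : ℝ)) =
        B.indicator (A.indicator fun _ => (1 : ℝ)) := by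
      rw [Set.indicator_indicator, Set.inter_comm]
    have h2 : (μ⟦A ∩ B | mV⟧) =ᵐ[μ] B.indicator e := by
      rw [h1, ← hedef]
      exact condExp_indicator hintA hB
    have h3 : (μ⟦A ∩ B | m'⟧) =ᵐ[μ] μ[μ⟦A ∩ B | mV⟧ | m'] :=
      (condExp_condExp_of_le hm'V hmV).symm
    have h4 : μ[μ⟦A ∩ B | mV⟧|m'] =ᵐ[μ] μ[B.indicator e|m'] :=
      condExp_congr_ae h2
    have h5 : B.indicator e = e * B.indicator (fun _ => (1 : ℝ)) := by
      funext ω; by_cases h : ω ∈ B <;> simp [h, Pi.mul_apply]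
    have h6 : μ[B.indicator e|m'] =ᵐ[μ]
        fun ω => e ω * (μ⟦B | m'⟧) ω := by
      rw [h5]
      refine (condExp_mul_of_stronglyMeasurable_left he_m'
        (by rw [← h5]; exact he_int.indicator hBΩ)
        ((integrable_const 1).indicator hBΩ)).trans ?_
      exact Filter.Eventually.of_forall fun ω => rfl
    exact h3.trans (h4.trans h6)
  have hPA : (μ⟦A | m'⟧) =ᵐ[μ] e := by
    have h3 : (μ⟦A | m'⟧) =ᵐ[μ] μ[μ⟦A | mV⟧ | m'] :=
      (condExp_condExp_of_le hm'V hmV).symm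
    rw [hedef, condExp_of_stronglyMeasurable hle he_m' he_int] at h3
    exact h3
  rw [condIndepFun_iff_condExp_inter_preimage_eq_mul hT hV]
  intro s t hs ht
  set B : Set Ω := V ⁻¹' t with hBdef
  have hBmV : MeasurableSet[mV] B := hVsets t ht
  have hBΩ : MeasurableSet B := hmV B hBmV
  have hintB : Integrable (B.indicator fun _ => (1 : ℝ)) μ :=
    (integrable_const 1).indicator hBΩ
  have h1 : μ[(fun _ => (1 : ℝ))|m'] = fun _ => (1 : ℝ) := condExp_const hle 1
  rcases set_fin_two s with rfl | rfl | rfl | rfl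
  · have h : T ⁻¹' (∅ : Set (Fin 2)) = ∅ := rfl
    rw [h]
    have hz : μ[(fun _ => (0 : ℝ))|m'] = 0 := condExp_zero
    simp only [Set.empty_inter, Set.indicator_empty, hz]
    filter_upwards with ω; simp
  · -- s = {0} : complement case
    have hpre : T ⁻¹' ({0} : Set (Fin 2)) = Aᶜ := by
      ext ω
      simp only [Set.mem_preimage, Set.mem_singleton_iff, Set.mem_compl_iff, hAdef]
      constructor
      · intro h h'; rw [h] at h'; exact absurd h' (by decide)
      · intro h; omega
    rw [hpre]
    have hindc : (Aᶜ ∩ B).indicator (fun _ => (1 : ℝ)) =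
        B.indicator (fun _ => (1 : ℝ)) - (A ∩ B).indicator (fun _ => (1 : ℝ)) := by
      funext ω
      by_cases hb : ω ∈ B <;> by_cases ha : ω ∈ A <;>
        simp [ha, hb, Set.indicator_apply]
    have hindA : (Aᶜ).indicator (fun _ => (1 : ℝ)) =
        (fun _ => (1 : ℝ)) - A.indicator (fun _ => (1 : ℝ)) := by
      funext ω; by_cases ha : ω ∈ A <;> simp [ha, Set.indicator_apply]
    have hL : (μ⟦Aᶜ ∩ B | m'⟧) =ᵐ[μ]
        fun ω => (μ⟦B | m'⟧) ω - e ω * (μ⟦B | m'⟧) ω := by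
      rw [hindc]
      refine (condExp_sub hintB (hintA.indicator hBΩ |>.congr ?_) m').trans ?_
      · filter_upwards with ω
        rw [Set.indicator_indicator, Set.inter_comm]
      · filter_upwards [key B hBmV] with ω hω
        simp only [Pi.sub_apply, hω]
    have hR : (μ⟦Aᶜ | m'⟧) =ᵐ[μ] fun ω => 1 - e ω := by
      rw [hindA]
      refine (condExp_sub (integrable_const 1) hintA m').trans ?_
      rw [h1]
      filter_upwards [hPA] with ω hω
      simp only [Pi.sub_apply, hω]
    filter_upwards [hL, hR] with ω hω1 hω2
    rw [hω1, hω2]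
    ring
  · -- s = {1}
    have hpre : T ⁻¹' ({1} : Set (Fin 2)) = A := rfl
    rw [hpre]
    refine (key B hBmV).trans ?_
    filter_upwards [hPA] with ω hω
    rw [hω]
  · have h : T ⁻¹' (Set.univ : Set (Fin 2)) = Set.univ := by simp
    rw [h]
    simp only [Set.univ_inter, Set.indicator_univ]
    rw [h1]
    filter_upwards with ω; simp

/-- The propensity score `e(V) = P(T = 1 | V)` is itself a balancing score: `T ⊥ V | e(V)`. -/
theorem propensity_is_balancing
    {Ω : Type*} {mΩ : MeasurableSpace Ω} [StandardBorelSpace Ω]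
    {μ : Measure Ω} [IsProbabilityMeasure μ]
    {𝒱 : Type*} [MeasurableSpace 𝒱]
    (T : Ω → Fin 2) (V : Ω → 𝒱)
    (hT : Measurable T) (hV : Measurable V)
    (hle : MeasurableSpace.comap
      (μ⟦T ⁻¹' {1} | MeasurableSpace.comap V inferInstance⟧) inferInstance ≤ mΩ) :
    CondIndepFun (MeasurableSpace.comap
      (μ⟦T ⁻¹' {1} | MeasurableSpace.comap V inferInstance⟧) inferInstance) hle T V μ :=
  balancing_aux T V hT hV
    stronglyMeasurable_condExp.measurable.comap_le hV.comap_le hle rfl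
    ((Measurable.of_comap_le le_rfl).stronglyMeasurable)
    (fun t ht => ⟨t, ht, rfl⟩)
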